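/- Consider the 2-dimensional complex ODE system iħ ċ_R = −ω c_L + Ω c_R + εC_σ|c_R|^{2σ}c_R, iħ ċ_L = −ω c_R + Ω c_L + εC_σ|c_L|^{2σ}c_L, with real parameters ħ > 0, ω, Ω, ε, C_σ and σ a positive integer. Then the quantity I(c_R, c_L) = Ω(|c_R|² + |c_L|²) − ω(conj(c_R)c_L + conj(c_L)c_R) + (εC_σ/(σ+1))(|c_R|^{2(σ+1)} + |c_L|^{2(σ+1)}) is constant along any C¹ solution. -/

import Mathlib

open Complex

lemma hasDerivAt_normSq' {f : ℝ → ℂ} {f' : ℂ} {x : ℝ} (hf : HasDerivAt f f' x) :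
    HasDerivAt (fun t => Complex.normSq (f t)) (2 * ((starRingEnd ℂ) (f x) * f').re) x := by
  have h1 : HasDerivAt (fun t => (f t).re) f'.re x :=
    Complex.reCLM.hasFDerivAt.comp_hasDerivAt x hf
  have h2 : HasDerivAt (fun t => (f t).im) f'.im x :=
    Complex.imCLM.hasFDerivAt.comp_hasDerivAt x hf
  have h := (h1.mul h1).add (h2.mul h2)
  refine h.congr_deriv ?_
  simp [Complex.mul_re]; ring

lemma key (hbar ω Ω ε Cσ : ℝ) (hh : hbar ≠ 0) (σ : ℕ) (a b : ℂ) (r s : ℝ)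
    (hr : r = (normSq a) ^ σ) (hs : s = (normSq b) ^ σ) :
    Ω * (2 * ((starRingEnd ℂ) a * ((Complex.I * hbar)⁻¹ * (-(ω:ℂ) * b + Ω * a + ε * Cσ * r * a))).re
        + 2 * ((starRingEnd ℂ) b * ((Complex.I * hbar)⁻¹ * (-(ω:ℂ) * a + Ω * b + ε * Cσ * s * b))).re)
      - ω * (((starRingEnd ℂ) ((Complex.I * hbar)⁻¹ * (-(ω:ℂ) * b + Ω * a + ε * Cσ * r * a)) * b
            + (starRingEnd ℂ) a * ((Complex.I * hbar)⁻¹ * (-(ω:ℂ) * a + Ω * b + ε * Cσ * s * b))).re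
          + ((starRingEnd ℂ) ((Complex.I * hbar)⁻¹ * (-(ω:ℂ) * a + Ω * b + ε * Cσ * s * b)) * a
            + (starRingEnd ℂ) b * ((Complex.I * hbar)⁻¹ * (-(ω:ℂ) * b + Ω * a + ε * Cσ * r * a))).re)
      + ε * Cσ / ((σ:ℝ) + 1) *
          (((σ:ℝ) + 1) * (normSq a) ^ σ *
              (2 * ((starRingEnd ℂ) a * ((Complex.I * hbar)⁻¹ * (-(ω:ℂ) * b + Ω * a + ε * Cσ * r * a))).re)
            + ((σ:ℝ) + 1) * (normSq b) ^ σ *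
              (2 * ((starRingEnd ℂ) b * ((Complex.I * hbar)⁻¹ * (-(ω:ℂ) * a + Ω * b + ε * Cσ * s * b))).re)) = 0 := by
  have hI : (Complex.I * (hbar:ℂ))⁻¹ = ((hbar⁻¹ : ℝ) : ℂ) * (-Complex.I) := by
    rw [mul_inv, Complex.inv_I]; push_cast; ring
  have hσ1 : ((σ:ℝ) + 1) ≠ 0 := by positivity
  subst hr hs
  rw [hI]
  simp only [Complex.mul_re, Complex.mul_im, Complex.add_re, Complex.add_im, Complex.neg_re,
    Complex.neg_im, Complex.I_re, Complex.I_im, Complex.ofReal_re, Complex.ofReal_im,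
    Complex.conj_re, Complex.conj_im, Complex.normSq_apply]
  field_simp
  ring

/-- The quantity
`I = Ω(|c_R|²+|c_L|²) − ω(c̄_R c_L + c̄_L c_R) + (εC_σ/(σ+1))(|c_R|^{2(σ+1)}+|c_L|^{2(σ+1)})`
is conserved along any C¹ solution of the two-mode nonlinear system. -/
theorem stmt4 (hbar ω Ω ε Cσ : ℝ) (hhbar : 0 < hbar) (σ : ℕ) (hσ : 1 ≤ σ)
    (cR cL : ℝ → ℂ)
    (hR : ∀ t, HasDerivAt cR
      ((Complex.I * hbar)⁻¹ * (-(ω : ℂ) * cL t + (Ω : ℂ) * cR t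
        + (ε : ℂ) * (Cσ : ℂ) * ((‖cR t‖ ^ (2 * σ) : ℝ) : ℂ) * cR t)) t)
    (hL : ∀ t, HasDerivAt cL
      ((Complex.I * hbar)⁻¹ * (-(ω : ℂ) * cR t + (Ω : ℂ) * cL t
        + (ε : ℂ) * (Cσ : ℂ) * ((‖cL t‖ ^ (2 * σ) : ℝ) : ℂ) * cL t)) t) :
    ∀ t : ℝ,
      Ω * (‖cR t‖ ^ 2 + ‖cL t‖ ^ 2)
        - ω * ((starRingEnd ℂ (cR t) * cL t + starRingEnd ℂ (cL t) * cR t).re)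
        + ε * Cσ / (σ + 1) * (‖cR t‖ ^ (2 * (σ + 1)) + ‖cL t‖ ^ (2 * (σ + 1)))
      = Ω * (‖cR 0‖ ^ 2 + ‖cL 0‖ ^ 2)
        - ω * ((starRingEnd ℂ (cR 0) * cL 0 + starRingEnd ℂ (cL 0) * cR 0).re)
        + ε * Cσ / (σ + 1) * (‖cR 0‖ ^ (2 * (σ + 1)) + ‖cL 0‖ ^ (2 * (σ + 1))) := by
  have hnorm : ∀ (z : ℂ) (n : ℕ), ‖z‖ ^ (2 * n) = (normSq z) ^ n := by
    intro z n
    rw [pow_mul, Complex.sq_norm]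
  set E : ℝ → ℝ := fun t =>
    Ω * (normSq (cR t) + normSq (cL t))
      - ω * ((starRingEnd ℂ (cR t) * cL t + starRingEnd ℂ (cL t) * cR t).re)
      + ε * Cσ / ((σ:ℝ) + 1) * ((normSq (cR t)) ^ (σ + 1) + (normSq (cL t)) ^ (σ + 1))
    with hEdef
  have hE : ∀ t, HasDerivAt E 0 t := by
    intro t
    set A := (Complex.I * (hbar:ℂ))⁻¹ * (-(ω : ℂ) * cL t + (Ω : ℂ) * cR t
        + (ε : ℂ) * (Cσ : ℂ) * ((‖cR t‖ ^ (2 * σ) : ℝ) : ℂ) * cR t) with hA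
    set B := (Complex.I * (hbar:ℂ))⁻¹ * (-(ω : ℂ) * cR t + (Ω : ℂ) * cL t
        + (ε : ℂ) * (Cσ : ℂ) * ((‖cL t‖ ^ (2 * σ) : ℝ) : ℂ) * cL t) with hB
    have haR : HasDerivAt cR A t := hR t
    have haL : HasDerivAt cL B t := hL t
    have h1 : HasDerivAt (fun u => normSq (cR u)) (2 * ((starRingEnd ℂ) (cR t) * A).re) t :=
      hasDerivAt_normSq' haR
    have h2 : HasDerivAt (fun u => normSq (cL u)) (2 * ((starRingEnd ℂ) (cL t) * B).re) t :=
      hasDerivAt_normSq' haL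
    have hw : HasDerivAt (fun u => (starRingEnd ℂ (cR u) * cL u + starRingEnd ℂ (cL u) * cR u).re)
        (((starRingEnd ℂ) A * cL t + (starRingEnd ℂ) (cR t) * B).re
          + ((starRingEnd ℂ) B * cR t + (starRingEnd ℂ) (cL t) * A).re) t := by
      have := ((haR.star.mul haL).add (haL.star.mul haR))
      have := Complex.reCLM.hasFDerivAt.comp_hasDerivAt t this
      refine this.congr_deriv ?_
      simp
    have hp1 : HasDerivAt (fun u => (normSq (cR u)) ^ (σ + 1))
        (((σ:ℝ) + 1) * (normSq (cR t)) ^ σ * (2 * ((starRingEnd ℂ) (cR t) * A).re)) t := by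
      have := h1.pow (σ + 1)
      refine this.congr_deriv ?_
      push_cast
      simp
    have hp2 : HasDerivAt (fun u => (normSq (cL u)) ^ (σ + 1))
        (((σ:ℝ) + 1) * (normSq (cL t)) ^ σ * (2 * ((starRingEnd ℂ) (cL t) * B).re)) t := by
      have := h2.pow (σ + 1)
      refine this.congr_deriv ?_
      push_cast
      simp
    have hcomb := (((h1.add h2).const_mul Ω).sub (hw.const_mul ω)).add
      ((hp1.add hp2).const_mul (ε * Cσ / ((σ:ℝ) + 1)))
    rw [hEdef]
    refine hcomb.congr_deriv ?_
    rw [hA, hB]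
    have := key hbar ω Ω ε Cσ (ne_of_gt hhbar) σ (cR t) (cL t)
      (‖cR t‖ ^ (2 * σ)) (‖cL t‖ ^ (2 * σ)) (hnorm _ σ) (hnorm _ σ)
    linarith [this]
  have hconst : ∀ t, E t = E 0 := by
    intro t
    exact is_const_of_deriv_eq_zero (fun x => (hE x).differentiableAt)
      (fun x => (hE x).deriv) t 0
  intro t
  have hEt : ∀ u : ℝ,
      Ω * (‖cR u‖ ^ 2 + ‖cL u‖ ^ 2)
        - ω * ((starRingEnd ℂ (cR u) * cL u + starRingEnd ℂ (cL u) * cR u).re)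
        + ε * Cσ / (σ + 1) * (‖cR u‖ ^ (2 * (σ + 1)) + ‖cL u‖ ^ (2 * (σ + 1))) = E u := by
    intro u
    rw [hEdef]
    have e1 : ‖cR u‖ ^ 2 = normSq (cR u) := by
      have := hnorm (cR u) 1; simpa using this
    have e2 : ‖cL u‖ ^ 2 = normSq (cL u) := by
      have := hnorm (cL u) 1; simpa using this
    rw [e1, e2, hnorm _ (σ + 1), hnorm _ (σ + 1)]
  rw [hEt t, hEt 0, hconst t]
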